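/- Let A and B be k-algebras equipped with connected gradings (X^s)_{s∈G} by a group G and (Y^t)_{t∈H} by a group H, respectively. Then the product algebra A × B admits a connected grading (Z^w)_{w∈G∗H} by the free product G ∗ H, defined by Z^1 = X^1 × Y^1, Z^{inl(s)} = X^s × 0 for s ∈ G with s ≠ 1, Z^{inr(t)} = 0 × Y^t for t ∈ H with t ≠ 1, and Z^w = 0 for all other w ∈ G ∗ H; its support is the union of the images of the supports of X and Y under the canonical inclusions, and it generates G ∗ H. -/
import Mathlib


open Monoid

/-- Let `A` and `B` be `k`-algebras with connected gradings `X` (by `G`) and `Y` (by `H`).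
Then `A × B` admits a connected grading `Z` by the free product `G ∗ H`, with
`Z^1 = X^1 × Y^1`, `Z^{inl s} = X^s × 0` for `s ≠ 1`, `Z^{inr t} = 0 × Y^t` for `t ≠ 1`
and `Z^w = 0` otherwise; its support is the union of the images of the supports of `X`
and `Y` under the canonical inclusions, and it generates `G ∗ H`. -/
theorem stmt12 (k : Type*) [Field k]
    (A : Type*) [Ring A] [Algebra k A] (B : Type*) [Ring B] [Algebra k B]
    (G : Type*) [Group G] (H : Type*) [Group H]
    (X : G → Submodule k A) (Y : H → Submodule k B)
    (hXind : iSupIndep X) (hXsup : (⨆ g, X g) = ⊤)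
    (hXmul : ∀ g g', X g * X g' ≤ X (g * g'))
    (hXconn : Subgroup.closure {g | X g ≠ ⊥} = ⊤)
    (hYind : iSupIndep Y) (hYsup : (⨆ t, Y t) = ⊤)
    (hYmul : ∀ t t', Y t * Y t' ≤ Y (t * t'))
    (hYconn : Subgroup.closure {t | Y t ≠ ⊥} = ⊤) :
    ∃ Z : Coprod G H → Submodule k (A × B),
      iSupIndep Z ∧ (⨆ w, Z w) = ⊤ ∧
      (∀ w w', Z w * Z w' ≤ Z (w * w')) ∧
      Z 1 = (X 1).prod (Y 1) ∧
      (∀ s : G, s ≠ 1 → Z (Coprod.inl s) = (X s).prod (⊥ : Submodule k B)) ∧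
      (∀ t : H, t ≠ 1 → Z (Coprod.inr t) = (⊥ : Submodule k A).prod (Y t)) ∧
      (∀ w : Coprod G H, (∀ s : G, w ≠ Coprod.inl s) → (∀ t : H, w ≠ Coprod.inr t) →
        Z w = ⊥) ∧
      {w | Z w ≠ ⊥} =
        (Coprod.inl '' {s : G | X s ≠ ⊥}) ∪ (Coprod.inr '' {t : H | Y t ≠ ⊥}) ∧
      Subgroup.closure {w | Z w ≠ ⊥} = ⊤ := by
  classical
  set P : Coprod G H → Submodule k A := fun w =>
    if h : ∃ s, (Coprod.inl s : Coprod G H) = w then X h.choose else ⊥ with hPdef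
  set Q : Coprod G H → Submodule k B := fun w =>
    if h : ∃ t, (Coprod.inr t : Coprod G H) = w then Y h.choose else ⊥ with hQdef
  have key : ∀ (s : G) (t : H), (Coprod.inl s : Coprod G H) = Coprod.inr t → s = 1 ∧ t = 1 := by
    intro s t h
    constructor
    · have := congrArg Coprod.fst h; simpa using this
    · have := congrArg Coprod.snd h; simpa using this.symm
  have hPinl : ∀ s, P (Coprod.inl s) = X s := by
    intro s
    have h : ∃ s', (Coprod.inl s' : Coprod G H) = Coprod.inl s := ⟨s, rfl⟩
    simp only [hPdef, dif_pos h]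
    congr 1
    exact Coprod.inl_injective h.choose_spec
  have hQinr : ∀ t, Q (Coprod.inr t) = Y t := by
    intro t
    have h : ∃ t', (Coprod.inr t' : Coprod G H) = Coprod.inr t := ⟨t, rfl⟩
    simp only [hQdef, dif_pos h]
    congr 1
    exact Coprod.inr_injective h.choose_spec
  have hPnot : ∀ w, (∀ s, (Coprod.inl s : Coprod G H) ≠ w) → P w = ⊥ := by
    intro w hw
    have h : ¬ ∃ s, (Coprod.inl s : Coprod G H) = w := by
      rintro ⟨s, hs⟩; exact hw s hs
    simp only [hPdef, dif_neg h]
  have hQnot : ∀ w, (∀ t, (Coprod.inr t : Coprod G H) ≠ w) → Q w = ⊥ := by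
    intro w hw
    have h : ¬ ∃ t, (Coprod.inr t : Coprod G H) = w := by
      rintro ⟨t, ht⟩; exact hw t ht
    simp only [hQdef, dif_neg h]
  -- multiplicativity of components
  have hPmul : ∀ w w', P w * P w' ≤ P (w * w') := by
    intro w w'
    by_cases h : ∃ s, (Coprod.inl s : Coprod G H) = w
    · obtain ⟨s, rfl⟩ := h
      by_cases h' : ∃ s', (Coprod.inl s' : Coprod G H) = w'
      · obtain ⟨s', rfl⟩ := h'
        rw [hPinl, hPinl, ← map_mul, hPinl]
        exact hXmul s s'
      · rw [hPnot w' (fun s' hs' => h' ⟨s', hs'⟩), Submodule.mul_bot]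
        exact bot_le
    · rw [hPnot w (fun s hs => h ⟨s, hs⟩), Submodule.bot_mul]
      exact bot_le
  have hQmul : ∀ w w', Q w * Q w' ≤ Q (w * w') := by
    intro w w'
    by_cases h : ∃ t, (Coprod.inr t : Coprod G H) = w
    · obtain ⟨t, rfl⟩ := h
      by_cases h' : ∃ t', (Coprod.inr t' : Coprod G H) = w'
      · obtain ⟨t', rfl⟩ := h'
        rw [hQinr, hQinr, ← map_mul, hQinr]
        exact hYmul t t'
      · rw [hQnot w' (fun t' ht' => h' ⟨t', ht'⟩), Submodule.mul_bot]
        exact bot_le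
    · rw [hQnot w (fun t ht => h ⟨t, ht⟩), Submodule.bot_mul]
      exact bot_le
  -- independence of components
  have hPind : iSupIndep P := by
    rw [iSupIndep_def]
    intro w
    by_cases h : ∃ s, (Coprod.inl s : Coprod G H) = w
    · obtain ⟨s₀, rfl⟩ := h
      rw [hPinl]
      refine (iSupIndep_def.mp hXind s₀).mono_right ?_
      refine iSup₂_le fun w' hne => ?_
      by_cases h' : ∃ s, (Coprod.inl s : Coprod G H) = w'
      · obtain ⟨s, rfl⟩ := h'
        rw [hPinl]
        have : s ≠ s₀ := fun hs => hne (by rw [hs])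
        exact le_iSup₂ (f := fun (j : G) (_ : j ≠ s₀) => X j) s this
      · rw [hPnot w' (fun s hs => h' ⟨s, hs⟩)]; exact bot_le
    · rw [hPnot w (fun s hs => h ⟨s, hs⟩)]
      exact disjoint_bot_left
  have hQind : iSupIndep Q := by
    rw [iSupIndep_def]
    intro w
    by_cases h : ∃ t, (Coprod.inr t : Coprod G H) = w
    · obtain ⟨t₀, rfl⟩ := h
      rw [hQinr]
      refine (iSupIndep_def.mp hYind t₀).mono_right ?_
      refine iSup₂_le fun w' hne => ?_
      by_cases h' : ∃ t, (Coprod.inr t : Coprod G H) = w'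
      · obtain ⟨t, rfl⟩ := h'
        rw [hQinr]
        have : t ≠ t₀ := fun ht => hne (by rw [ht])
        exact le_iSup₂ (f := fun (j : H) (_ : j ≠ t₀) => Y j) t this
      · rw [hQnot w' (fun t ht => h' ⟨t, ht⟩)]; exact bot_le
    · rw [hQnot w (fun t ht => h ⟨t, ht⟩)]
      exact disjoint_bot_left
  refine ⟨fun w => (P w).prod (Q w), ?_, ?_, ?_, ?_, ?_, ?_, ?_, ?_, ?_⟩
  · -- iSupIndep Z
    rw [iSupIndep_def]
    intro w
    rw [Submodule.disjoint_def]
    intro x hx hx'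
    have hle : (⨆ (j) (_ : j ≠ w), (P j).prod (Q j)) ≤
        (⨆ (j) (_ : j ≠ w), P j).prod (⨆ (j) (_ : j ≠ w), Q j) := by
      refine iSup₂_le fun j hj => ?_
      intro y hy
      rw [Submodule.mem_prod] at hy ⊢
      exact ⟨(le_iSup₂ (f := fun (j : Coprod G H) (_ : j ≠ w) => P j) j hj) hy.1,
        (le_iSup₂ (f := fun (j : Coprod G H) (_ : j ≠ w) => Q j) j hj) hy.2⟩
    have hx'' := hle hx'
    rw [Submodule.mem_prod] at hx hx''
    have h1 : x.1 = 0 :=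
      (Submodule.disjoint_def.mp (iSupIndep_def.mp hPind w)) x.1 hx.1 hx''.1
    have h2 : x.2 = 0 :=
      (Submodule.disjoint_def.mp (iSupIndep_def.mp hQind w)) x.2 hx.2 hx''.2
    exact Prod.ext h1 h2
  · -- supremum is top
    have hA : ∀ a : A, ((a, 0) : A × B) ∈ ⨆ w, (P w).prod (Q w) := by
      intro a
      have ha : a ∈ ⨆ s, X s := hXsup ▸ Submodule.mem_top
      have : ((a, 0) : A × B) ∈ (⨆ s, X s).map (LinearMap.inl k A B) :=
        Submodule.mem_map_of_mem ha
      rw [Submodule.map_iSup] at this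
      have hle : (⨆ s, (X s).map (LinearMap.inl k A B)) ≤ ⨆ w, (P w).prod (Q w) := by
        refine iSup_le fun s => ?_
        rintro _ ⟨x, hx, rfl⟩
        exact le_iSup (fun w => (P w).prod (Q w)) (Coprod.inl s)
          (Submodule.mem_prod.mpr ⟨by rwa [hPinl], Submodule.zero_mem _⟩)
      exact hle this
    have hB : ∀ b : B, ((0, b) : A × B) ∈ ⨆ w, (P w).prod (Q w) := by
      intro b
      have hb : b ∈ ⨆ t, Y t := hYsup ▸ Submodule.mem_top
      have : ((0, b) : A × B) ∈ (⨆ t, Y t).map (LinearMap.inr k A B) :=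
        Submodule.mem_map_of_mem hb
      rw [Submodule.map_iSup] at this
      have hle : (⨆ t, (Y t).map (LinearMap.inr k A B)) ≤ ⨆ w, (P w).prod (Q w) := by
        refine iSup_le fun t => ?_
        rintro _ ⟨y, hy, rfl⟩
        exact le_iSup (fun w => (P w).prod (Q w)) (Coprod.inr t)
          (Submodule.mem_prod.mpr ⟨Submodule.zero_mem _, by rwa [hQinr]⟩)
      exact hle this
    rw [eq_top_iff]
    rintro ⟨a, b⟩ -
    have : ((a, b) : A × B) = (a, 0) + (0, b) := by simp
    rw [this]
    exact Submodule.add_mem _ (hA a) (hB b)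
  · -- multiplicativity
    intro w w'
    rw [Submodule.mul_le]
    intro x hx y hy
    rw [Submodule.mem_prod] at hx hy ⊢
    exact ⟨hPmul w w' (Submodule.mul_mem_mul hx.1 hy.1),
      hQmul w w' (Submodule.mul_mem_mul hx.2 hy.2)⟩
  · -- Z 1
    have h1 : (1 : Coprod G H) = Coprod.inl 1 := (map_one _).symm
    have h2 : (1 : Coprod G H) = Coprod.inr 1 := (map_one _).symm
    show (P 1).prod (Q 1) = (X 1).prod (Y 1)
    rw [show P 1 = X 1 by rw [h1, hPinl], show Q 1 = Y 1 by rw [h2, hQinr]]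
  · -- Z (inl s), s ≠ 1
    intro s hs
    show (P (Coprod.inl s)).prod (Q (Coprod.inl s)) = _
    rw [hPinl]
    congr 1
    apply hQnot
    intro t ht
    exact hs (key s t ht.symm).1
  · -- Z (inr t), t ≠ 1
    intro t ht
    show (P (Coprod.inr t)).prod (Q (Coprod.inr t)) = _
    rw [hQinr]
    congr 1
    apply hPnot
    intro s hs
    exact ht (key s t hs).2
  · -- other w
    intro w hw1 hw2
    show (P w).prod (Q w) = ⊥
    rw [hPnot w (fun s hs => hw1 s hs.symm), hQnot w (fun t ht => hw2 t ht.symm)]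
    exact (Submodule.prod_eq_bot_iff k A B).mpr ⟨rfl, rfl⟩
  · -- support
    ext w
    simp only [Set.mem_setOf_eq, Set.mem_union, Set.mem_image, ne_eq,
      Submodule.prod_eq_bot_iff, not_and_or]
    constructor
    · rintro (hP | hQ)
      · left
        by_cases h : ∃ s, (Coprod.inl s : Coprod G H) = w
        · obtain ⟨s, rfl⟩ := h
          exact ⟨s, by rwa [hPinl] at hP, rfl⟩
        · exact absurd (hPnot w (fun s hs => h ⟨s, hs⟩)) hP
      · right
        by_cases h : ∃ t, (Coprod.inr t : Coprod G H) = w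
        · obtain ⟨t, rfl⟩ := h
          exact ⟨t, by rwa [hQinr] at hQ, rfl⟩
        · exact absurd (hQnot w (fun t ht => h ⟨t, ht⟩)) hQ
    · rintro (⟨s, hs, rfl⟩ | ⟨t, ht, rfl⟩)
      · left; rwa [hPinl]
      · right; rwa [hQinr]
  · -- closure of support is top
    rw [eq_top_iff, ← Coprod.range_inl_sup_range_inr (G := G) (H := H)]
    refine sup_le ?_ ?_
    · rw [MonoidHom.range_eq_map, ← hXconn, MonoidHom.map_closure]
      refine Subgroup.closure_le _ |>.mpr ?_
      rintro _ ⟨s, hs, rfl⟩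
      apply Subgroup.subset_closure
      simp only [Set.mem_setOf_eq, ne_eq, Submodule.prod_eq_bot_iff, not_and_or]
      left; rwa [hPinl]
    · rw [MonoidHom.range_eq_map, ← hYconn, MonoidHom.map_closure]
      refine Subgroup.closure_le _ |>.mpr ?_
      rintro _ ⟨t, ht, rfl⟩
      apply Subgroup.subset_closure
      simp only [Set.mem_setOf_eq, ne_eq, Submodule.prod_eq_bot_iff, not_and_or]
      right; rwa [hQinr]
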